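/- Let q : ℕ → ℝ be nonnegative and nondecreasing with q_1 > 0, let s : ℕ → ℝ, set Q_n := ∑_{j=1}^{n-1} q_j and σ_j := (1/j)·∑_{k=1}^{j} s_k. Then for every n ≥ 2, |(1/Q_n)·∑_{j=1}^{n-1} q_j s_j| ≤ ((2·(n−1)·q_{n-1} − Q_n)/Q_n) · sup_{1 ≤ j ≤ n-1} |σ_j|. In particular, if (n−1)·q_{n-1} ≤ c·Q_n for some c ≥ 1, the left-hand side is at most (2c − 1)·sup_{1 ≤ j ≤ n-1}|σ_j|. -/

import Mathlib

open Finset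

private lemma abelA (q s : ℕ → ℝ) (m : ℕ) :
    ∑ j ∈ Icc 1 m, q j * s j =
      q m * (∑ k ∈ Icc 1 m, s k) +
        ∑ j ∈ Icc 1 (m-1), (q j - q (j+1)) * (∑ k ∈ Icc 1 j, s k) := by
  induction m with
  | zero => simp
  | succ m ih =>
    rcases Nat.eq_zero_or_pos m with rfl | hm
    · norm_num
    obtain ⟨k, rfl⟩ : ∃ k, m = k + 1 := ⟨m-1, by omega⟩
    simp only [Nat.add_sub_cancel] at ih ⊢
    rw [Finset.sum_Icc_succ_top (show (1:ℕ) ≤ k+1+1 by omega), ih,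
        Finset.sum_Icc_succ_top (show (1:ℕ) ≤ k+1 by omega) (fun j => (q j - q (j+1)) * (∑ k ∈ Icc 1 j, s k)),
        Finset.sum_Icc_succ_top (show (1:ℕ) ≤ k+1+1 by omega) s]
    try simp only [Nat.add_sub_cancel]
    ring

private lemma abelB (q : ℕ → ℝ) (m : ℕ) (hm : 1 ≤ m) :
    ∑ j ∈ Icc 1 (m-1), (q (j+1) - q j) * (j:ℝ) =
      (m:ℝ) * q m - ∑ j ∈ Icc 1 m, q j := by
  induction m, hm using Nat.le_induction with
  | base => simp
  | succ m hm ih =>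
    obtain ⟨k, rfl⟩ : ∃ k, m = k + 1 := ⟨m-1, by omega⟩
    simp only [Nat.add_sub_cancel] at ih ⊢
    rw [Finset.sum_Icc_succ_top (show (1:ℕ) ≤ k+1 by omega), ih,
        Finset.sum_Icc_succ_top (show (1:ℕ) ≤ k+1+1 by omega) q]
    push_cast
    ring

theorem Tmean_dominated_by_Fejer_max_nondecreasing
    (q : ℕ → ℝ) (hq0 : ∀ j, 0 ≤ q j) (hmono : ∀ j, q j ≤ q (j+1)) (hq1 : 0 < q 1)
    (s : ℕ → ℝ) (n : ℕ) (hn : 2 ≤ n) :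
    (|(1 / (∑ j ∈ Finset.Icc 1 (n-1), q j)) * ∑ j ∈ Finset.Icc 1 (n-1), q j * s j| ≤
      ((2 * ((n : ℝ) - 1) * q (n-1) - ∑ j ∈ Finset.Icc 1 (n-1), q j)
          / (∑ j ∈ Finset.Icc 1 (n-1), q j)) *
        (Finset.Icc 1 (n-1)).sup' (Finset.nonempty_Icc.mpr (by omega))
          (fun j => |(1 / (j : ℝ)) * ∑ k ∈ Finset.Icc 1 j, s k|)) ∧
    ∀ c : ℝ, 1 ≤ c → ((n : ℝ) - 1) * q (n-1) ≤ c * ∑ j ∈ Finset.Icc 1 (n-1), q j →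
      |(1 / (∑ j ∈ Finset.Icc 1 (n-1), q j)) * ∑ j ∈ Finset.Icc 1 (n-1), q j * s j| ≤
        (2 * c - 1) *
          (Finset.Icc 1 (n-1)).sup' (Finset.nonempty_Icc.mpr (by omega))
            (fun j => |(1 / (j : ℝ)) * ∑ k ∈ Finset.Icc 1 j, s k|) := by
  have hcast : (n:ℝ) - 1 = ((n-1 : ℕ) : ℝ) := by
    rw [Nat.cast_sub (by omega)]; norm_num
  rw [hcast]
  set m := n - 1 with hmdef
  have hm1 : 1 ≤ m := by omega
  set Q : ℝ := ∑ j ∈ Finset.Icc 1 m, q j with hQdef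
  set M : ℝ := (Finset.Icc 1 m).sup' (Finset.nonempty_Icc.mpr (by omega))
      (fun j => |(1 / (j : ℝ)) * ∑ k ∈ Finset.Icc 1 j, s k|) with hMdef
  have h1m : 1 ∈ Finset.Icc 1 m := by simp [hm1]
  have hQpos : 0 < Q := lt_of_lt_of_le hq1 (Finset.single_le_sum (fun i _ => hq0 i) h1m)
  have hM0 : 0 ≤ M := by
    rw [hMdef]
    exact le_trans (abs_nonneg _) (Finset.le_sup' (fun (j:ℕ) => |(1 / (j : ℝ)) * ∑ k ∈ Finset.Icc 1 j, s k|) h1m)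
  have hS : ∀ j ∈ Finset.Icc 1 m, |∑ k ∈ Finset.Icc 1 j, s k| ≤ (j:ℝ) * M := by
    intro j hj
    have hj1 : 1 ≤ j := (Finset.mem_Icc.mp hj).1
    have hjpos : (0:ℝ) < (j:ℝ) := by exact_mod_cast hj1
    have := Finset.le_sup' (fun (j:ℕ) => |(1 / (j : ℝ)) * ∑ k ∈ Finset.Icc 1 j, s k|) hj
    rw [abs_mul, abs_of_nonneg (by positivity : (0:ℝ) ≤ 1/(j:ℝ))] at this
    calc |∑ k ∈ Finset.Icc 1 j, s k|
        = (j:ℝ) * (1/(j:ℝ) * |∑ k ∈ Finset.Icc 1 j, s k|) := by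
          field_simp
      _ ≤ (j:ℝ) * M := by
          exact mul_le_mul_of_nonneg_left this (le_of_lt hjpos)
  have key : |∑ j ∈ Finset.Icc 1 m, q j * s j| ≤ (2 * (m:ℝ) * q m - Q) * M := by
    rw [abelA]
    calc |q m * (∑ k ∈ Finset.Icc 1 m, s k) +
            ∑ j ∈ Finset.Icc 1 (m-1), (q j - q (j+1)) * (∑ k ∈ Finset.Icc 1 j, s k)|
        ≤ |q m * (∑ k ∈ Finset.Icc 1 m, s k)| +
            |∑ j ∈ Finset.Icc 1 (m-1), (q j - q (j+1)) * (∑ k ∈ Finset.Icc 1 j, s k)| :=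
          abs_add_le _ _
      _ ≤ q m * ((m:ℝ) * M) +
            ∑ j ∈ Finset.Icc 1 (m-1), (q (j+1) - q j) * ((j:ℝ) * M) := by
          apply add_le_add
          · rw [abs_mul, abs_of_nonneg (hq0 m)]
            exact mul_le_mul_of_nonneg_left (hS m (by simp [hm1])) (hq0 m)
          · refine le_trans (Finset.abs_sum_le_sum_abs _ _) (Finset.sum_le_sum ?_)
            intro j hj
            have hjm : j ∈ Finset.Icc 1 m := by
              rw [Finset.mem_Icc] at hj ⊢; omega
            rw [abs_mul, abs_sub_comm, abs_of_nonneg (by linarith [hmono j] : 0 ≤ q (j+1) - q j)]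
            exact mul_le_mul_of_nonneg_left (hS j hjm) (by linarith [hmono j])
      _ = (2 * (m:ℝ) * q m - Q) * M := by
          have : ∑ j ∈ Finset.Icc 1 (m-1), (q (j+1) - q j) * ((j:ℝ) * M)
              = (∑ j ∈ Finset.Icc 1 (m-1), (q (j+1) - q j) * (j:ℝ)) * M := by
            rw [Finset.sum_mul]; apply Finset.sum_congr rfl; intros; ring
          rw [this, abelB q m hm1]
          ring
  constructor
  · rw [abs_mul, abs_of_nonneg (by positivity : (0:ℝ) ≤ 1/Q)]
    calc 1/Q * |∑ j ∈ Finset.Icc 1 m, q j * s j|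
        ≤ 1/Q * ((2 * (m:ℝ) * q m - Q) * M) :=
          mul_le_mul_of_nonneg_left key (by positivity)
      _ = (2 * (m:ℝ) * q m - Q) / Q * M := by ring
  · intro c hc hcb
    have h1 : |1/Q * ∑ j ∈ Finset.Icc 1 m, q j * s j| ≤ (2 * (m:ℝ) * q m - Q) / Q * M := by
      rw [abs_mul, abs_of_nonneg (by positivity : (0:ℝ) ≤ 1/Q)]
      calc 1/Q * |∑ j ∈ Finset.Icc 1 m, q j * s j|
          ≤ 1/Q * ((2 * (m:ℝ) * q m - Q) * M) :=
            mul_le_mul_of_nonneg_left key (by positivity)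
        _ = (2 * (m:ℝ) * q m - Q) / Q * M := by ring
    refine le_trans h1 (mul_le_mul_of_nonneg_right ?_ hM0)
    rw [div_le_iff₀ hQpos]
    nlinarith
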